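/- If G is a (P₄ ∪ P₂)-free graph with clique number ω, then the chromatic number of G is at most ω(ω+1)(ω+2)/6. -/

import Mathlib

open SimpleGraph

/-- `H` occurs as an induced subgraph of `G`. -/
def IsInducedCopy {α β : Type*} (H : SimpleGraph α) (G : SimpleGraph β) : Prop :=
  ∃ f : α ↪ β, ∀ a b : α, G.Adj (f a) (f b) ↔ H.Adj a b

/-- `G` is `H`-free: no induced copy of `H`. -/
def Free {α β : Type*} (G : SimpleGraph α) (H : SimpleGraph β) : Prop :=
  ¬ IsInducedCopy H G

/-- `P₃ ∪ P₂`: disjoint union of a path on 3 vertices and an edge. -/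
def P3UP2 : SimpleGraph (Fin 5) :=
  SimpleGraph.fromRel (fun a b => (a, b) ∈ [((0 : Fin 5), (1 : Fin 5)), (1, 2), (3, 4)])

/-- The diamond: `K₄` minus an edge. -/
def diamondG : SimpleGraph (Fin 4) :=
  SimpleGraph.fromRel (fun a b =>
    (a, b) ∈ [((0 : Fin 4), (2 : Fin 4)), (0, 3), (1, 2), (1, 3), (2, 3)])

/-- `2K₂`: two disjoint edges. -/
def twoK2 : SimpleGraph (Fin 4) :=
  SimpleGraph.fromRel (fun a b => (a, b) ∈ [((0 : Fin 4), (1 : Fin 4)), (2, 3)])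

/-- `P₄ ∪ P₂`. -/
def P4UP2 : SimpleGraph (Fin 6) :=
  SimpleGraph.fromRel (fun a b =>
    (a, b) ∈ [((0 : Fin 6), (1 : Fin 6)), (1, 2), (2, 3), (4, 5)])

/-- The cycle on `n` vertices (for `n ≥ 3`), as a graph on `ZMod n`. -/
def cycG (n : ℕ) : SimpleGraph (ZMod n) :=
  SimpleGraph.fromRel (fun a b => b = a + 1)

/-- A graph is perfect if every induced subgraph has chromatic number
equal to its clique number. -/
def IsPerfect {V : Type*} (G : SimpleGraph V) : Prop :=
  ∀ s : Set V, (G.induce s).chromaticNumber = ((G.induce s).cliqueNum : ℕ∞)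

/-- The set `C_{ij}` attached to a maximum clique enumerated by `f : Fin ω ↪ V`:
vertices outside the clique, non-adjacent to both `f i` and `f j`, where `(i,j)`
is the lexicographically least such pair (this closed form is equivalent to the
iterative definition removing earlier `C`-sets). -/
def Cset {V : Type*} (G : SimpleGraph V) {ω : ℕ} (f : Fin ω ↪ V) (i j : Fin ω) : Set V :=
  {v | v ∉ Set.range f ∧ ¬ G.Adj v (f i) ∧ ¬ G.Adj v (f j) ∧
    ∀ p q : Fin ω, p < q → ¬ G.Adj v (f p) → ¬ G.Adj v (f q) →
      i < p ∨ (i = p ∧ j ≤ q)}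

/-- The set `I_a` attached to a maximum clique enumerated by `f : Fin ω ↪ V`:
vertices outside the clique adjacent to every clique vertex except `f k`. -/
def Iset {V : Type*} (G : SimpleGraph V) {ω : ℕ} (f : Fin ω ↪ V) (k : Fin ω) : Set V :=
  {v | v ∉ Set.range f ∧ ¬ G.Adj v (f k) ∧ ∀ l : Fin ω, l ≠ k → G.Adj v (f l)}

section Aux
open Finset

instance : DecidableRel P4UP2.Adj :=
  fun x y => decidable_of_iff _ (SimpleGraph.fromRel_adj _ x y).symm

lemma inj6 {α : Type*} {a b c d e g : α} (h1 : a≠b) (h2 : a≠c) (h3 : a≠d) (h4 : a≠e)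
    (h5 : a≠g) (h6 : b≠c) (h7 : b≠d) (h8 : b≠e) (h9 : b≠g) (h10 : c≠d) (h11 : c≠e)
    (h12 : c≠g) (h13 : d≠e) (h14 : d≠g) (h15 : e≠g) :
    Function.Injective ![a,b,c,d,e,g] := by
  intro x y h
  fin_cases x <;> fin_cases y <;>
    first | rfl | (exact absurd h ‹_›) | (exact absurd h.symm ‹_›)


def P4Free {W : Type*} (H : SimpleGraph W) : Prop :=
  ∀ a b c d : W, H.Adj a b → H.Adj b c → H.Adj c d →
    ¬ H.Adj a c → ¬ H.Adj a d → ¬ H.Adj b d → False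

def IndepF {W : Type*} (H : SimpleGraph W) (I : Finset W) : Prop :=
  ∀ u ∈ I, ∀ v ∈ I, u ≠ v → ¬ H.Adj u v

lemma exists_max_indep {W : Type*} [Fintype W] (H : SimpleGraph W) :
    ∃ I : Finset W, IndepF H I ∧ ∀ J : Finset W, IndepF H J → J.card ≤ I.card := by
  classical
  obtain ⟨I, hI, hmax⟩ := Finset.exists_max_image
    ((Finset.univ : Finset (Finset W)).filter (fun J => IndepF H J)) Finset.card
    ⟨∅, Finset.mem_filter.mpr ⟨Finset.mem_univ _, by simp [IndepF]⟩⟩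
  simp only [Finset.mem_filter, Finset.mem_univ, true_and] at hI hmax
  exact ⟨I, hI, fun J hJ => hmax J (by simp [hJ])⟩

lemma hit_lemma {W : Type*} [Fintype W] {H : SimpleGraph W} (hp : P4Free H)
    {I : Finset W} (hI : IndepF H I) (hImax : ∀ J : Finset W, IndepF H J → J.card ≤ I.card)
    {K : Finset W} (hK : H.IsNClique H.cliqueNum K) (hKne : K.Nonempty) :
    ∃ x ∈ K, x ∈ I := by
  classical
  by_contra hdisj
  push_neg at hdisj
  -- every vertex outside I has a neighbor in I
  have hnbr : ∀ v : W, v ∉ I → ∃ u ∈ I, H.Adj u v := by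
    intro v hv
    by_contra hno
    push_neg at hno
    have hind : IndepF H (insert v I) := by
      intro a ha b hb hab h
      rcases Finset.mem_insert.mp ha with ha' | ha' <;>
        rcases Finset.mem_insert.mp hb with hb' | hb'
      · exact hab (ha'.trans hb'.symm)
      · exact hno b hb' (by rw [ha'] at h; exact h.symm)
      · exact hno a ha' (by rw [hb'] at h; exact h)
      · exact hI a ha' b hb' hab h
    have := hImax _ hind
    rw [Finset.card_insert_of_notMem hv] at this
    omega
  -- no vertex of I is adjacent to all of K
  have hnotall : ∀ i ∈ I, ∃ w ∈ K, ¬ H.Adj i w := by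
    intro i hi
    by_contra hall
    push_neg at hall
    have hiK : i ∉ K := fun h => hdisj i h hi
    have : H.IsClique (insert i (K : Set W)) := by
      intro a ha b hb hab
      rcases ha with rfl | ha
      · rcases hb with rfl | hb
        · exact absurd rfl hab
        · exact hall b hb
      · rcases hb with rfl | hb
        · exact (hall a ha).symm
        · exact hK.isClique ha hb hab
    have hc : H.IsClique ((insert i K : Finset W) : Set W) := by
      simpa using this
    have := hc.card_le_cliqueNum
    rw [Finset.card_insert_of_notMem hiK, hK.card_eq] at this
    omega
  -- pick i in I maximizing #neighbors in K
  obtain ⟨v0, hv0⟩ := hKne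
  have hv0I : v0 ∉ I := fun h => hdisj v0 hv0 h
  obtain ⟨i0, hi0I, hi0v0⟩ := hnbr v0 hv0I
  obtain ⟨i, hiI, himax⟩ := Finset.exists_max_image I
    (fun x => (K.filter (fun w => H.Adj x w)).card) ⟨i0, hi0I⟩
  obtain ⟨w, hwK, hiw⟩ := hnotall i hiI
  have hwI : w ∉ I := fun h => hdisj w hwK h
  obtain ⟨j, hjI, hjw⟩ := hnbr w hwI
  have hij : i ≠ j := fun h => hiw (h ▸ hjw)
  have hiaj : ¬ H.Adj i j := hI i hiI j hjI hij
  have hv : ∃ v ∈ K, H.Adj i v ∧ ¬ H.Adj j v := by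
    by_contra hno
    push_neg at hno
    have hsub : insert w (K.filter (fun x => H.Adj i x)) ⊆ K.filter (fun x => H.Adj j x) := by
      intro x hx
      rcases Finset.mem_insert.mp hx with rfl | hx
      · exact Finset.mem_filter.mpr ⟨hwK, hjw⟩
      · obtain ⟨hxK, hix⟩ := Finset.mem_filter.mp hx
        exact Finset.mem_filter.mpr ⟨hxK, hno x hxK hix⟩
    have hwnot : w ∉ K.filter (fun x => H.Adj i x) := by
      simp [hiw]
    have := Finset.card_le_card hsub
    rw [Finset.card_insert_of_notMem hwnot] at this
    have := himax j hjI
    omega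
  obtain ⟨v, hvK, hiv, hjv⟩ := hv
  have hvw : v ≠ w := fun h => hjv (by rw [h]; exact hjw)
  have hvwadj : H.Adj v w := hK.isClique hvK hwK hvw
  exact hp i v w j hiv hvwadj hjw.symm hiw hiaj (fun h => hjv h.symm)

lemma p4free_colorable : ∀ (n : ℕ) {W : Type*} [Fintype W] (H : SimpleGraph W),
    P4Free H → H.cliqueNum ≤ n → H.Colorable n := by
  intro n
  induction n with
  | zero =>
    intro W _ H hp hcn
    have : IsEmpty W := by
      by_contra hne
      rw [not_isEmpty_iff] at hne
      obtain ⟨v⟩ := hne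
      have h1 : H.IsClique ({v} : Finset W) := by simp
      have := h1.card_le_cliqueNum
      simp at this
      omega
    exact ⟨⟨fun v => isEmptyElim v, fun {a} => isEmptyElim a⟩⟩
  | succ n ih =>
    intro W _ H hp hcn
    classical
    by_cases hcn' : H.cliqueNum ≤ n
    · exact (ih H hp hcn').mono (Nat.le_succ n)
    have hceq : H.cliqueNum = n + 1 := by omega
    rcases isEmpty_or_nonempty W with hW | hW
    · exact ⟨⟨fun v => isEmptyElim v, fun {a} => isEmptyElim a⟩⟩
    obtain ⟨I, hI, hImax⟩ := exists_max_indep H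
    set s : Set W := {v | v ∉ I} with hs
    have hp' : P4Free (H.induce s) := by
      intro a b c d h1 h2 h3 n1 n2 n3
      exact hp a b c d h1 h2 h3 n1 n2 n3
    have hcn'' : (H.induce s).cliqueNum ≤ n := by
      by_contra hgt
      push_neg at hgt
      obtain ⟨K', hK'⟩ := (H.induce s).exists_isNClique_cliqueNum
      set K : Finset W := K'.image Subtype.val with hKdef
      have hKcard : K.card = K'.card := Finset.card_image_of_injective _ Subtype.val_injective
      have hKclique : H.IsClique (K : Set W) := by
        intro a ha b hb hab
        simp only [hKdef, Finset.coe_image, Set.mem_image, Finset.mem_coe] at ha hb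
        obtain ⟨a', ha', rfl⟩ := ha
        obtain ⟨b', hb', rfl⟩ := hb
        have hab' : a' ≠ b' := fun h => hab (by rw [h])
        exact hK'.isClique ha' hb' hab'
      have hle : K.card ≤ H.cliqueNum := hKclique.card_le_cliqueNum
      have hKcn : K.card = H.cliqueNum := by
        rw [hKcard, hK'.card_eq] at hle ⊢; omega
      have hKne : K.Nonempty := by
        rw [← Finset.card_pos, hKcn, hceq]; omega
      obtain ⟨x, hxK, hxI⟩ := hit_lemma hp hI hImax ⟨hKclique, hKcn⟩ hKne
      simp only [hKdef, Finset.mem_image] at hxK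
      obtain ⟨x', hx', rfl⟩ := hxK
      exact x'.prop hxI
    obtain ⟨C'⟩ := ih (H.induce s) hp' hcn''
    have hC'lt : ∀ v, (C' v : ℕ) < n := fun v => (C' v).isLt
    refine ⟨⟨fun v => if h : v ∈ I then ⟨n, Nat.lt_succ_self n⟩ else ⟨C' ⟨v, h⟩, Nat.lt_succ_of_lt (hC'lt _)⟩, ?_⟩⟩
    intro v w hadj
    split_ifs with h1 h2 h3
    · exact absurd hadj (hI v h1 w h2 hadj.ne)
    · intro hcol
      have := hC'lt ⟨w, h2⟩
      simp only [Fin.mk.injEq] at hcol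
      omega
    · intro hcol
      have := hC'lt ⟨v, h1⟩
      simp only [Fin.mk.injEq] at hcol
      omega
    · intro hcol
      simp only [Fin.mk.injEq, Fin.val_inj] at hcol
      have hne : (⟨v, h1⟩ : s) ≠ ⟨w, h3⟩ := by
        intro h
        exact hadj.ne (congrArg Subtype.val h)
      have : (H.induce s).Adj ⟨v, h1⟩ ⟨w, h3⟩ := hadj
      exact C'.valid this hcol

open scoped Classical in
noncomputable def Anbr {V : Type*} [Fintype V] (G : SimpleGraph V) {n : ℕ} (f : Fin n → V)
    (v : V) : Finset (Fin n) :=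
  Finset.univ.filter (fun k => ¬ G.Adj v (f k))

noncomputable def idx1 {V : Type*} [Fintype V] (G : SimpleGraph V) {n : ℕ} [NeZero n]
    (f : Fin n → V) (v : V) : Fin n :=
  if h : (Anbr G f v).Nonempty then (Anbr G f v).min' h else 0

noncomputable def idx2 {V : Type*} [Fintype V] (G : SimpleGraph V) {n : ℕ} [NeZero n]
    (f : Fin n → V) (v : V) : Fin n :=
  if h : ((Anbr G f v).erase (idx1 G f v)).Nonempty then
    ((Anbr G f v).erase (idx1 G f v)).min' h else 0

def Cpair {V : Type*} [Fintype V] (G : SimpleGraph V) {n : ℕ} [NeZero n]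
    (f : Fin n → V) (i j : Fin n) : Set V :=
  {v | v ∉ Set.range f ∧ 2 ≤ (Anbr G f v).card ∧ idx1 G f v = i ∧ idx2 G f v = j}

section Main
variable {V : Type*} [Fintype V] {G : SimpleGraph V} {n : ℕ} {f : Fin n → V}

lemma mem_Anbr {v : V} {k : Fin n} : k ∈ Anbr G f v ↔ ¬ G.Adj v (f k) := by
  classical
  simp [Anbr]

variable (hf : Function.Injective f) (hK : G.IsClique (Set.range f))
  (hmax : ∀ t : Finset V, G.IsClique (t : Set V) → t.card ≤ n)

include hf hK hmax in
lemma Anbr_nonempty {v : V} (hv : v ∉ Set.range f) : (Anbr G f v).Nonempty := by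
  classical
  by_contra hne
  rw [Finset.not_nonempty_iff_eq_empty] at hne
  have hadj : ∀ k, G.Adj v (f k) := by
    intro k
    by_contra h
    have : k ∈ Anbr G f v := mem_Anbr.mpr h
    simp [hne] at this
  set t : Finset V := insert v (Finset.univ.image f) with ht
  have htc : G.IsClique (t : Set V) := by
    intro a ha b hb hab
    simp only [ht, Finset.coe_insert, Set.mem_insert_iff, Finset.coe_image,
      Finset.coe_univ, Set.image_univ, Set.mem_range] at ha hb
    rcases ha with rfl | ⟨k, rfl⟩
    · rcases hb with rfl | ⟨l, rfl⟩
      · exact absurd rfl hab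
      · exact hadj l
    · rcases hb with rfl | ⟨l, rfl⟩
      · exact (hadj k).symm
      · exact hK ⟨k, rfl⟩ ⟨l, rfl⟩ hab
  have hvim : v ∉ Finset.univ.image f := by
    simp only [Finset.mem_image, Finset.mem_univ, true_and]
    rintro ⟨k, rfl⟩
    exact hv ⟨k, rfl⟩
  have := hmax t htc
  rw [ht, Finset.card_insert_of_notMem hvim,
    Finset.card_image_of_injective _ hf, Finset.card_univ, Fintype.card_fin] at this
  omega

lemma idx_facts [NeZero n] {v : V} (h2 : 2 ≤ (Anbr G f v).card) :
    idx1 G f v < idx2 G f v ∧ idx1 G f v ∈ Anbr G f v ∧ idx2 G f v ∈ Anbr G f v ∧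
    (∀ p ∈ Anbr G f v, idx1 G f v ≤ p) ∧
    (∀ p ∈ Anbr G f v, p ≠ idx1 G f v → idx2 G f v ≤ p) := by
  classical
  have hne : (Anbr G f v).Nonempty := Finset.card_pos.mp (by omega)
  have h1 : idx1 G f v = (Anbr G f v).min' hne := by rw [idx1, dif_pos hne]
  have hi1mem : idx1 G f v ∈ Anbr G f v := by rw [h1]; exact Finset.min'_mem _ _
  have hi1min : ∀ p ∈ Anbr G f v, idx1 G f v ≤ p := by
    intro p hp; rw [h1]; exact Finset.min'_le _ _ hp
  have hene : ((Anbr G f v).erase (idx1 G f v)).Nonempty := by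
    rw [← Finset.card_pos, Finset.card_erase_of_mem hi1mem]
    omega
  have h2d : idx2 G f v = ((Anbr G f v).erase (idx1 G f v)).min' hene := by
    rw [idx2, dif_pos hene]
  have hi2mem' : idx2 G f v ∈ (Anbr G f v).erase (idx1 G f v) := by
    rw [h2d]; exact Finset.min'_mem _ _
  have hi2mem : idx2 G f v ∈ Anbr G f v := Finset.mem_of_mem_erase hi2mem'
  have hi2min : ∀ p ∈ Anbr G f v, p ≠ idx1 G f v → idx2 G f v ≤ p := by
    intro p hp hpne
    rw [h2d]
    exact Finset.min'_le _ _ (Finset.mem_erase.mpr ⟨hpne, hp⟩)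
  have hlt : idx1 G f v < idx2 G f v :=
    lt_of_le_of_ne (hi1min _ hi2mem) (Finset.ne_of_mem_erase hi2mem').symm
  exact ⟨hlt, hi1mem, hi2mem, hi1min, hi2min⟩

include hf hK hmax in
lemma Iset_indep [NeZero n] {v w : V} (hv : v ∉ Set.range f) (hw : w ∉ Set.range f)
    (hv1 : (Anbr G f v).card = 1) (hw1 : (Anbr G f w).card = 1)
    (hvw : v ≠ w) (heq : idx1 G f v = idx1 G f w) (hadj : G.Adj v w) : False := by
  classical
  obtain ⟨k, hk⟩ := Finset.card_eq_one.mp hv1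
  have hkv : idx1 G f v = k := by
    have hne : (Anbr G f v).Nonempty := by rw [hk]; exact ⟨k, Finset.mem_singleton_self k⟩
    rw [idx1, dif_pos hne]
    exact Finset.card_le_one.mp (by omega) _ ((Anbr G f v).min'_mem hne) k
      (by rw [hk]; exact Finset.mem_singleton_self k)
  obtain ⟨k', hk'⟩ := Finset.card_eq_one.mp hw1
  have hkw : idx1 G f w = k' := by
    have hne : (Anbr G f w).Nonempty := by rw [hk']; exact ⟨k', Finset.mem_singleton_self k'⟩
    rw [idx1, dif_pos hne]
    exact Finset.card_le_one.mp (by omega) _ ((Anbr G f w).min'_mem hne) k'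
      (by rw [hk']; exact Finset.mem_singleton_self k')
  have hkk' : k = k' := by rw [← hkv, heq, hkw]
  subst hkk'
  -- v and w are adjacent to every f l with l ≠ k
  have hvadj : ∀ l : Fin n, l ≠ k → G.Adj v (f l) := by
    intro l hl
    by_contra h
    have : l ∈ Anbr G f v := mem_Anbr.mpr h
    rw [hk] at this
    exact hl (Finset.mem_singleton.mp this)
  have hwadj : ∀ l : Fin n, l ≠ k → G.Adj w (f l) := by
    intro l hl
    by_contra h
    have : l ∈ Anbr G f w := mem_Anbr.mpr h
    rw [hk'] at this
    exact hl (Finset.mem_singleton.mp this)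
  set t : Finset V := insert v (insert w ((Finset.univ.erase k).image f)) with ht
  have himg : ∀ x ∈ (Finset.univ.erase k).image f, ∃ l : Fin n, l ≠ k ∧ f l = x := by
    intro x hx
    simp only [Finset.mem_image, Finset.mem_erase, Finset.mem_univ, and_true] at hx
    obtain ⟨l, hl, rfl⟩ := hx
    exact ⟨l, hl, rfl⟩
  have htc : G.IsClique (t : Set V) := by
    intro a ha b hb hab
    simp only [ht, Finset.coe_insert, Set.mem_insert_iff, Finset.mem_coe] at ha hb
    rcases ha with rfl | rfl | ha
    · rcases hb with rfl | rfl | hb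
      · exact absurd rfl hab
      · exact hadj
      · obtain ⟨l, hl, rfl⟩ := himg _ hb; exact hvadj l hl
    · rcases hb with rfl | rfl | hb
      · exact hadj.symm
      · exact absurd rfl hab
      · obtain ⟨l, hl, rfl⟩ := himg _ hb; exact hwadj l hl
    · obtain ⟨l, hl, rfl⟩ := himg _ ha
      rcases hb with rfl | rfl | hb
      · exact (hvadj l hl).symm
      · exact (hwadj l hl).symm
      · obtain ⟨l', hl', rfl⟩ := himg _ hb
        exact hK ⟨l, rfl⟩ ⟨l', rfl⟩ hab
  have hwimg : w ∉ (Finset.univ.erase k).image f := by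
    intro h
    obtain ⟨l, _, rfl⟩ := himg _ h
    exact hw ⟨l, rfl⟩
  have hvins : v ∉ insert w ((Finset.univ.erase k).image f) := by
    intro h
    rcases Finset.mem_insert.mp h with rfl | h
    · exact hvw rfl
    · obtain ⟨l, _, rfl⟩ := himg _ h
      exact hv ⟨l, rfl⟩
  have := hmax t htc
  rw [ht, Finset.card_insert_of_notMem hvins, Finset.card_insert_of_notMem hwimg,
    Finset.card_image_of_injOn (fun a _ b _ h => hf h),
    Finset.card_erase_of_mem (Finset.mem_univ k), Finset.card_univ, Fintype.card_fin] at this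
  have hn : 1 ≤ n := NeZero.one_le
  omega

end Main

section Main2
variable {V : Type*} [Fintype V] {G : SimpleGraph V} {n : ℕ} {f : Fin n → V}

lemma Cpair_mem_props [NeZero n] {i j : Fin n} {v : V} (hv : v ∈ Cpair G f i j) :
    v ∉ Set.range f ∧ ¬G.Adj v (f i) ∧ ¬G.Adj v (f j) ∧ i < j ∧
    ∀ p : Fin n, p < j → p ≠ i → G.Adj v (f p) := by
  obtain ⟨hvr, h2, hi, hj⟩ := hv
  obtain ⟨hlt, h1m, h2m, h1min, h2min⟩ := idx_facts (G := G) (f := f) h2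
  rw [hi] at h1m h1min h2min
  rw [hj] at h2m h2min
  rw [hi, hj] at hlt
  refine ⟨hvr, mem_Anbr.mp h1m, mem_Anbr.mp h2m, hlt, ?_⟩
  intro p hpj hpi
  by_contra h
  have hp := mem_Anbr.mpr h
  exact absurd (h2min p hp hpi) (not_le.mpr hpj)

variable (hf : Function.Injective f) (hK : G.IsClique (Set.range f))
  (hmax : ∀ t : Finset V, G.IsClique (t : Set V) → t.card ≤ n)

include hf hK in
lemma Cpair_p4free [NeZero n] (hfree : _root_.Free G P4UP2) (i j : Fin n) :
    P4Free (G.induce (Cpair G f i j)) := by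
  intro a b c d hab hbc hcd nac nad nbd
  obtain ⟨ra, nai, naj, hij, -⟩ := Cpair_mem_props (G := G) (f := f) a.prop
  obtain ⟨rb, nbi, nbj, -, -⟩ := Cpair_mem_props (G := G) (f := f) b.prop
  obtain ⟨rc, nci, ncj, -, -⟩ := Cpair_mem_props (G := G) (f := f) c.prop
  obtain ⟨rd, ndi, ndj, -, -⟩ := Cpair_mem_props (G := G) (f := f) d.prop
  have H1 : G.Adj a.1 b.1 := hab
  have H2 : G.Adj b.1 c.1 := hbc
  have H3 : G.Adj c.1 d.1 := hcd
  have N1 : ¬ G.Adj a.1 c.1 := nac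
  have N2 : ¬ G.Adj a.1 d.1 := nad
  have N3 : ¬ G.Adj b.1 d.1 := nbd
  have hfij : f i ≠ f j := fun h => absurd (hf h) (ne_of_lt hij)
  have H4 : G.Adj (f i) (f j) := hK ⟨i, rfl⟩ ⟨j, rfl⟩ hfij
  apply hfree
  refine ⟨⟨![a.1, b.1, c.1, d.1, f i, f j],
    inj6 H1.ne (fun h => N2 (by rw [h]; exact H3))
      (fun h => N1 (by rw [h]; exact H3.symm))
      (fun h => ra ⟨i, h.symm⟩) (fun h => ra ⟨j, h.symm⟩)
      H2.ne (fun h => N2 (by rw [← h]; exact H1))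
      (fun h => rb ⟨i, h.symm⟩) (fun h => rb ⟨j, h.symm⟩)
      H3.ne (fun h => rc ⟨i, h.symm⟩) (fun h => rc ⟨j, h.symm⟩)
      (fun h => rd ⟨i, h.symm⟩) (fun h => rd ⟨j, h.symm⟩) hfij⟩, ?_⟩
  intro x y
  fin_cases x <;> fin_cases y <;>
    first
      | exact iff_of_false (fun h => G.irrefl h) (by decide)
      | exact iff_of_true H1 (by decide)
      | exact iff_of_true H2 (by decide)
      | exact iff_of_true H3 (by decide)
      | exact iff_of_true H4 (by decide)
      | exact iff_of_true H1.symm (by decide)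
      | exact iff_of_true H2.symm (by decide)
      | exact iff_of_true H3.symm (by decide)
      | exact iff_of_true H4.symm (by decide)
      | exact iff_of_false N1 (by decide)
      | exact iff_of_false N2 (by decide)
      | exact iff_of_false N3 (by decide)
      | exact iff_of_false nai (by decide)
      | exact iff_of_false naj (by decide)
      | exact iff_of_false nbi (by decide)
      | exact iff_of_false nbj (by decide)
      | exact iff_of_false nci (by decide)
      | exact iff_of_false ncj (by decide)
      | exact iff_of_false ndi (by decide)
      | exact iff_of_false ndj (by decide)
      | exact iff_of_false (fun h => N1 h.symm) (by decide)
      | exact iff_of_false (fun h => N2 h.symm) (by decide)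
      | exact iff_of_false (fun h => N3 h.symm) (by decide)
      | exact iff_of_false (fun h => nai h.symm) (by decide)
      | exact iff_of_false (fun h => naj h.symm) (by decide)
      | exact iff_of_false (fun h => nbi h.symm) (by decide)
      | exact iff_of_false (fun h => nbj h.symm) (by decide)
      | exact iff_of_false (fun h => nci h.symm) (by decide)
      | exact iff_of_false (fun h => ncj h.symm) (by decide)
      | exact iff_of_false (fun h => ndi h.symm) (by decide)
      | exact iff_of_false (fun h => ndj h.symm) (by decide)

include hf hK hmax in
lemma Cpair_cliqueNum [NeZero n] (i j : Fin n) :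
    (G.induce (Cpair G f i j)).cliqueNum ≤ n + 1 - j.val := by
  classical
  obtain ⟨Q', hQ'⟩ := (G.induce (Cpair G f i j)).exists_isNClique_cliqueNum
  rcases Q'.eq_empty_or_nonempty with rfl | ⟨v0, hv0⟩
  · have := hQ'.card_eq
    simp only [Finset.card_empty] at this
    omega
  · have hij : i < j := (Cpair_mem_props (G := G) (f := f) v0.prop).2.2.2.1
    set Q : Finset V := Q'.image Subtype.val with hQdef
    set B : Finset V := ((Finset.Iio j).erase i).image f with hBdef
    have hmemQ : ∀ x ∈ Q, ∃ q : (Cpair G f i j : Set V), q ∈ Q' ∧ q.1 = x := by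
      intro x hx
      simp only [hQdef, Finset.mem_image] at hx
      obtain ⟨q, hq, rfl⟩ := hx
      exact ⟨q, hq, rfl⟩
    have hmemB : ∀ x ∈ B, ∃ p : Fin n, p < j ∧ p ≠ i ∧ f p = x := by
      intro x hx
      simp only [hBdef, Finset.mem_image, Finset.mem_erase, Finset.mem_Iio] at hx
      obtain ⟨p, ⟨hpne, hplt⟩, rfl⟩ := hx
      exact ⟨p, hplt, hpne, rfl⟩
    have hQcard : Q.card = Q'.card := Finset.card_image_of_injective _ Subtype.val_injective
    have hBcard : B.card = j.val - 1 := by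
      rw [hBdef, Finset.card_image_of_injective _ hf,
        Finset.card_erase_of_mem (Finset.mem_Iio.mpr hij), Fin.card_Iio]
    have hdisj : Disjoint Q B := by
      rw [Finset.disjoint_left]
      intro x hxQ hxB
      obtain ⟨q, _, rfl⟩ := hmemQ x hxQ
      obtain ⟨p, _, _, hp⟩ := hmemB _ hxB
      exact (Cpair_mem_props (G := G) (f := f) q.prop).1 ⟨p, hp⟩
    have hclique : G.IsClique ((Q ∪ B : Finset V) : Set V) := by
      intro x hx y hy hxy
      rw [Finset.coe_union, Set.mem_union] at hx hy
      rcases hx with hx | hx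
      · obtain ⟨q, hqQ, rfl⟩ := hmemQ x hx
        rcases hy with hy | hy
        · obtain ⟨q', hq'Q, rfl⟩ := hmemQ y hy
          have hne : q ≠ q' := fun h => hxy (by rw [h])
          exact hQ'.isClique hqQ hq'Q hne
        · obtain ⟨p, hpj, hpi, rfl⟩ := hmemB y hy
          exact (Cpair_mem_props (G := G) (f := f) q.prop).2.2.2.2 p hpj hpi
      · obtain ⟨p, hpj, hpi, rfl⟩ := hmemB x hx
        rcases hy with hy | hy
        · obtain ⟨q, hqQ, rfl⟩ := hmemQ y hy
          exact ((Cpair_mem_props (G := G) (f := f) q.prop).2.2.2.2 p hpj hpi).symm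
        · obtain ⟨p', hp'j, hp'i, rfl⟩ := hmemB y hy
          exact hK ⟨p, rfl⟩ ⟨p', rfl⟩ hxy
    have hle := hmax _ hclique
    rw [Finset.card_union_of_disjoint hdisj, hQcard, hQ'.card_eq, hBcard] at hle
    have hj1 : 1 ≤ j.val := by
      have := hij
      rw [Fin.lt_def] at this
      omega
    omega

end Main2

lemma six_sum (w : ℕ) :
    6 * (w + ∑ t ∈ Finset.range w, t * (w + 1 - t)) = w * (w + 1) * (w + 2) := by
  induction w with
  | zero => simp
  | succ k ih =>
    have hstep : ∀ t ∈ Finset.range k, t * (k + 1 + 1 - t) = t * (k + 1 - t) + t := by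
      intro t ht
      rw [Finset.mem_range] at ht
      have h : k + 1 + 1 - t = (k + 1 - t) + 1 := by omega
      rw [h, Nat.mul_add, Nat.mul_one]
    have hlast : k + 1 + 1 - k = 2 := by omega
    rw [Finset.sum_range_succ, Finset.sum_congr rfl hstep, Finset.sum_add_distrib, hlast]
    have h2 : (∑ t ∈ Finset.range k, t) * 2 = k * (k - 1) := Finset.sum_range_id_mul_two k
    cases k with
    | zero => simp
    | succ m =>
      rw [Nat.succ_sub_one] at h2
      zify at ih h2 ⊢
      linear_combination ih + 3 * h2

section Idx1
variable {V : Type*} [Fintype V] {G : SimpleGraph V} {n : ℕ} {f : Fin n → V}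

lemma idx1_mem [NeZero n] {v : V} (h : (Anbr G f v).Nonempty) :
    idx1 G f v ∈ Anbr G f v := by
  rw [idx1, dif_pos h]; exact Finset.min'_mem _ _

end Idx1

def offsetN (n m : ℕ) : ℕ := ∑ t ∈ Finset.range m, t * (n + 1 - t)

lemma offsetN_succ (n m : ℕ) : offsetN n (m + 1) = offsetN n m + m * (n + 1 - m) :=
  Finset.sum_range_succ _ _

lemma offsetN_mono (n : ℕ) {m m' : ℕ} (h : m ≤ m') : offsetN n m ≤ offsetN n m' :=
  Finset.sum_le_sum_of_subset (Finset.range_subset_range.mpr h)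

lemma pack_lt {n i j i' j' : ℕ} (h : j < j' ∨ (j = j' ∧ i < i')) (hij : i < j) :
    offsetN n j + i * (n + 1 - j) + (n + 1 - j) ≤ offsetN n j' + i' * (n + 1 - j') := by
  rcases h with h | ⟨rfl, h⟩
  · have h1 : offsetN n j + i * (n + 1 - j) + (n + 1 - j) ≤ offsetN n (j + 1) := by
      rw [offsetN_succ]
      have : i * (n + 1 - j) + (n + 1 - j) = (i + 1) * (n + 1 - j) := by ring
      rw [Nat.add_assoc, this]
      exact Nat.add_le_add_left (Nat.mul_le_mul_right _ (by omega)) _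
    exact le_trans h1 (le_trans (offsetN_mono n h) (Nat.le_add_right _ _))
  · have : i * (n + 1 - j) + (n + 1 - j) = (i + 1) * (n + 1 - j) := by ring
    rw [Nat.add_assoc, this]
    exact Nat.add_le_add_left (Nat.mul_le_mul_right _ (by omega)) _

lemma pack_disjoint {n i j i' j' c c' : ℕ} (hij : i < j) (hij' : i' < j')
    (hjn : j ≤ n) (hj'n : j' ≤ n) (hc : c < n + 1 - j) (hc' : c' < n + 1 - j')
    (heq : offsetN n j + i * (n + 1 - j) + c = offsetN n j' + i' * (n + 1 - j') + c') :
    i = i' ∧ j = j' := by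
  rcases lt_trichotomy j j' with h | rfl | h
  · have := pack_lt (n := n) (i' := i') (Or.inl h) hij
    omega
  · rcases lt_trichotomy i i' with h | rfl | h
    · have := pack_lt (n := n) (Or.inr ⟨rfl, h⟩) hij
      omega
    · exact ⟨rfl, rfl⟩
    · have := pack_lt (n := n) (Or.inr ⟨rfl, h⟩) hij'
      omega
  · have := pack_lt (n := n) (i' := i) (Or.inl h) hij'
    omega

lemma pack_bound {n i j c : ℕ} (hij : i < j) (hjn : j + 1 ≤ n) (hc : c < n + 1 - j) :
    offsetN n j + i * (n + 1 - j) + c < offsetN n n := by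
  have h1 : i * (n + 1 - j) + c < j * (n + 1 - j) := by
    have h2 : (i + 1) * (n + 1 - j) ≤ j * (n + 1 - j) := Nat.mul_le_mul_right _ (by omega)
    have h3 : (i + 1) * (n + 1 - j) = i * (n + 1 - j) + (n + 1 - j) := by ring
    omega
  have h4 := offsetN_succ n j
  have h5 := offsetN_mono n hjn
  omega

end Aux

theorem stmt1 {V : Type*} [Fintype V] (G : SimpleGraph V) (hfree : _root_.Free G P4UP2) :
    G.chromaticNumber ≤ ((G.cliqueNum * (G.cliqueNum + 1) * (G.cliqueNum + 2) / 6 : ℕ) : ℕ∞) := by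
  classical
  rw [chromaticNumber_le_iff_colorable]
  set n := G.cliqueNum with hn
  set N := n * (n + 1) * (n + 2) / 6 with hN
  rcases isEmpty_or_nonempty V with hV | hV
  · exact ⟨⟨fun v => isEmptyElim v, fun {a} => isEmptyElim a⟩⟩
  -- basic facts
  have hn1 : 1 ≤ n := by
    obtain ⟨v⟩ := hV
    have h1 : G.IsClique ({v} : Finset V) := by simp
    have := h1.card_le_cliqueNum
    simpa using this
  haveI : NeZero n := ⟨by omega⟩
  obtain ⟨K, hK⟩ := G.exists_isNClique_cliqueNum
  have hcard : K.card = n := hK.card_eq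
  set e := (K.equivFinOfCardEq hcard).symm with he
  set f : Fin n → V := fun k => (e k : V) with hfdef
  have hf : Function.Injective f :=
    fun x y h => e.injective (Subtype.ext h)
  have hrange : Set.range f = (K : Set V) := by
    ext x
    constructor
    · rintro ⟨k, rfl⟩
      exact (e k).prop
    · intro hx
      exact ⟨e.symm ⟨x, hx⟩, congrArg Subtype.val (e.apply_symm_apply ⟨x, hx⟩)⟩
  have hKc : G.IsClique (Set.range f) := by rw [hrange]; exact hK.isClique
  have hmax : ∀ t : Finset V, G.IsClique (t : Set V) → t.card ≤ n :=
    fun t ht => ht.card_le_cliqueNum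
  have hnotr : ∀ {v : V}, v ∉ K → v ∉ Set.range f := by
    intro v hv hr
    rw [hrange] at hr
    exact hv hr
  have hne : ∀ {v : V}, v ∉ K → (Anbr G f v).Nonempty :=
    fun hv => Anbr_nonempty hf hKc hmax (hnotr hv)
  -- colorings of the C-classes
  have hcpair : ∀ i j : Fin n,
      ∃ C : (G.induce (Cpair G f i j)).Coloring ℕ, ∀ v, C v < n + 1 - j.val := by
    intro i j
    have h1 := Cpair_p4free hf hKc hfree i j
    have h2 := Cpair_cliqueNum hf hKc hmax i j
    have h3 := p4free_colorable _ _ h1 le_rfl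
    exact (colorable_iff_exists_bdd_nat_coloring _).mp (h3.mono h2)
  choose CC hCC using hcpair
  -- the global coloring
  set col : V → ℕ := fun v =>
    if hv : v ∈ K then (e.symm ⟨v, hv⟩ : Fin n).val
    else if h2 : 2 ≤ (Anbr G f v).card then
      n + (offsetN n (idx2 G f v).val + (idx1 G f v).val * (n + 1 - (idx2 G f v).val)
        + CC (idx1 G f v) (idx2 G f v) ⟨v, hnotr hv, h2, rfl, rfl⟩)
    else (idx1 G f v).val
    with hcol
  have colK : ∀ {v : V} (hv : v ∈ K), col v = (e.symm ⟨v, hv⟩ : Fin n).val := by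
    intro v hv; rw [hcol]; exact dif_pos hv
  have colI : ∀ {v : V} (hv : v ∉ K), ¬ 2 ≤ (Anbr G f v).card →
      col v = (idx1 G f v).val := by
    intro v hv h2; rw [hcol]; simp only; rw [dif_neg hv, dif_neg h2]
  have colC : ∀ {v : V} (hv : v ∉ K) (h2 : 2 ≤ (Anbr G f v).card),
      col v = n + (offsetN n (idx2 G f v).val
        + (idx1 G f v).val * (n + 1 - (idx2 G f v).val)
        + CC (idx1 G f v) (idx2 G f v) ⟨v, hnotr hv, h2, rfl, rfl⟩) := by
    intro v hv h2; rw [hcol]; simp only; rw [dif_neg hv, dif_pos h2]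
  -- bound on colors
  have hNbig : n + offsetN n n ≤ N := by
    rw [hN, Nat.le_div_iff_mul_le (by norm_num)]
    rw [Nat.mul_comm]
    exact le_of_eq (six_sum n)
  have hbound : ∀ v, col v < N := by
    intro v
    by_cases hv : v ∈ K
    · rw [colK hv]
      have : ((e.symm ⟨v, hv⟩ : Fin n)).val < n := (e.symm ⟨v, hv⟩).isLt
      have h0 : 0 ≤ offsetN n n := Nat.zero_le _
      omega
    · by_cases h2 : 2 ≤ (Anbr G f v).card
      · rw [colC hv h2]
        obtain ⟨hlt, -, -, -, -⟩ := idx_facts (G := G) (f := f) h2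
        have hij : (idx1 G f v).val < (idx2 G f v).val := hlt
        have hjn : (idx2 G f v).val + 1 ≤ n := (idx2 G f v).isLt
        have hc := hCC (idx1 G f v) (idx2 G f v) ⟨v, hnotr hv, h2, rfl, rfl⟩
        have := pack_bound hij hjn hc
        omega
      · rw [colI hv h2]
        have : (idx1 G f v).val < n := (idx1 G f v).isLt
        have h0 : 0 ≤ offsetN n n := Nat.zero_le _
        omega
  -- validity
  have hvalid : ∀ {v w : V}, G.Adj v w → col v ≠ col w := by
    intro v w hadj heq
    have hvw : v ≠ w := hadj.ne
    by_cases hv : v ∈ K <;> by_cases hw : w ∈ K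
    · rw [colK hv, colK hw] at heq
      have : (⟨v, hv⟩ : {x // x ∈ K}) = ⟨w, hw⟩ := e.symm.injective (Fin.ext heq)
      exact hvw (congrArg Subtype.val this)
    · by_cases h2 : 2 ≤ (Anbr G f w).card
      · rw [colK hv, colC hw h2] at heq
        have : ((e.symm ⟨v, hv⟩ : Fin n)).val < n := (e.symm ⟨v, hv⟩).isLt
        omega
      · rw [colK hv, colI hw h2] at heq
        have hk : idx1 G f w = e.symm ⟨v, hv⟩ := Fin.ext heq.symm
        have hmem := idx1_mem (G := G) (f := f) (hne hw)
        rw [mem_Anbr, hk] at hmem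
        have hfv : f (e.symm ⟨v, hv⟩) = v :=
          congrArg Subtype.val (e.apply_symm_apply ⟨v, hv⟩)
        rw [hfv] at hmem
        exact hmem hadj.symm
    · by_cases h2 : 2 ≤ (Anbr G f v).card
      · rw [colK hw, colC hv h2] at heq
        have : ((e.symm ⟨w, hw⟩ : Fin n)).val < n := (e.symm ⟨w, hw⟩).isLt
        omega
      · rw [colK hw, colI hv h2] at heq
        have hk : idx1 G f v = e.symm ⟨w, hw⟩ := Fin.ext heq
        have hmem := idx1_mem (G := G) (f := f) (hne hv)
        rw [mem_Anbr, hk] at hmem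
        have hfw : f (e.symm ⟨w, hw⟩) = w :=
          congrArg Subtype.val (e.apply_symm_apply ⟨w, hw⟩)
        rw [hfw] at hmem
        exact hmem hadj
    · by_cases h2v : 2 ≤ (Anbr G f v).card <;> by_cases h2w : 2 ≤ (Anbr G f w).card
      · -- both C-type
        rw [colC hv h2v, colC hw h2w] at heq
        obtain ⟨hltv, -, -, -, -⟩ := idx_facts (G := G) (f := f) h2v
        obtain ⟨hltw, -, -, -, -⟩ := idx_facts (G := G) (f := f) h2w
        have hcv := hCC (idx1 G f v) (idx2 G f v) ⟨v, hnotr hv, h2v, rfl, rfl⟩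
        have hcw := hCC (idx1 G f w) (idx2 G f w) ⟨w, hnotr hw, h2w, rfl, rfl⟩
        have heq' : offsetN n (idx2 G f v).val
            + (idx1 G f v).val * (n + 1 - (idx2 G f v).val)
            + CC (idx1 G f v) (idx2 G f v) ⟨v, hnotr hv, h2v, rfl, rfl⟩
            = offsetN n (idx2 G f w).val
            + (idx1 G f w).val * (n + 1 - (idx2 G f w).val)
            + CC (idx1 G f w) (idx2 G f w) ⟨w, hnotr hw, h2w, rfl, rfl⟩ := by omega
        obtain ⟨hi, hj⟩ := pack_disjoint (n := n) hltv hltw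
          (le_of_lt (idx2 G f v).isLt) (le_of_lt (idx2 G f w).isLt) hcv hcw heq'
        have hi' : idx1 G f v = idx1 G f w := Fin.ext hi
        have hj' : idx2 G f v = idx2 G f w := Fin.ext hj
        -- transport v's membership to the (i,j) of w
        have hCCcongr : ∀ {i j i' j' : Fin n} (hie : i = i') (hje : j = j') {x : V}
            (m : x ∈ Cpair G f i j) (m' : x ∈ Cpair G f i' j'),
            CC i j ⟨x, m⟩ = CC i' j' ⟨x, m'⟩ := by
          intro i j i' j' hie hje x m m'
          subst hie; subst hje; rfl
        have hvmem2 : v ∈ Cpair G f (idx1 G f w) (idx2 G f w) :=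
          ⟨hnotr hv, h2v, hi', hj'⟩
        have hadj2 : (G.induce (Cpair G f (idx1 G f w) (idx2 G f w))).Adj
            ⟨v, hvmem2⟩ ⟨w, hnotr hw, h2w, rfl, rfl⟩ := hadj
        apply (CC (idx1 G f w) (idx2 G f w)).valid hadj2
        have h1 : CC (idx1 G f v) (idx2 G f v) ⟨v, hnotr hv, h2v, rfl, rfl⟩
            = CC (idx1 G f w) (idx2 G f w) ⟨v, hvmem2⟩ := hCCcongr hi' hj' _ _
        rw [← h1]
        rw [hi, hj] at heq'
        omega
      · rw [colC hv h2v, colI hw h2w] at heq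
        have : (idx1 G f w).val < n := (idx1 G f w).isLt
        omega
      · rw [colC hw h2w, colI hv h2v] at heq
        have : (idx1 G f v).val < n := (idx1 G f v).isLt
        omega
      · -- both I-type
        rw [colI hv h2v, colI hw h2w] at heq
        have hv1 : (Anbr G f v).card = 1 := by
          have := (hne hv).card_pos
          omega
        have hw1 : (Anbr G f w).card = 1 := by
          have := (hne hw).card_pos
          omega
        exact Iset_indep hf hKc hmax (hnotr hv) (hnotr hw) hv1 hw1 hvw (Fin.ext heq) hadj
  exact (colorable_iff_exists_bdd_nat_coloring N).mpr ⟨⟨col, hvalid⟩, hbound⟩
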